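/- The family (P_{-4,2n+4})_{n ≥ 0} is not classical: if a, b, c₀, e, f ∈ ℂ are such that for every natural number n there exists λ_n ∈ ℂ with (a·x² + b·x + c₀)·(P_{-4,2n+4})'' + (e·x + f)·(P_{-4,2n+4})' = λ_n·P_{-4,2n+4} as an identity in ℂ[x], then a = b = c₀ = e = f = 0. In other words, no nonzero differential operator of order at most two with polynomial coefficients of degree at most the order and without constant term has all the polynomials P_{-4,2n+4} as eigenfunctions. -/

import Mathlib

open Polynomial

/-- the family `P_{-4,2n+4}` (with `P_{-4,k} = Q_k(1,0,0,0)` in shifted indexing,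
over `ℂ`) is not classical: if a second order operator
`(ax² + bx + c₀)(d/dx)² + (ex + f)(d/dx)` has every `P_{-4,2n+4}` as an eigenfunction, then
`a = b = c₀ = e = f = 0`. -/
theorem stmt_14 (Q : ℕ → Polynomial ℂ)
    (h0 : Q 0 = 1) (h1 : Q 1 = 0) (h2 : Q 2 = 0) (h3 : Q 3 = 0)
    (hrec : ∀ k : ℕ, 4 ≤ k →
      Polynomial.C (2 * (k : ℂ) - 2) * Q k =
        Polynomial.C (4 * ((k : ℂ) - 4)) * X * Q (k - 2)
          - Polynomial.C (2 * ((k : ℂ) - 7)) * Q (k - 4))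
    (a b c₀ e f : ℂ)
    (heig : ∀ n : ℕ, ∃ lam : ℂ,
      (Polynomial.C a * X ^ 2 + Polynomial.C b * X + Polynomial.C c₀) *
          derivative (derivative (Q (2 * n + 4)))
        + (Polynomial.C e * X + Polynomial.C f) * derivative (Q (2 * n + 4))
      = Polynomial.C lam * Q (2 * n + 4)) :
    a = 0 ∧ b = 0 ∧ c₀ = 0 ∧ e = 0 ∧ f = 0 := by
  have h4 := hrec 4 (by norm_num)
  have h6 := hrec 6 (by norm_num)
  have h8 := hrec 8 (by norm_num)
  have h10 := hrec 10 (by norm_num)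
  have h12 := hrec 12 (by norm_num)
  rw [h2, h0] at h4
  norm_num at h4 h6 h8 h10 h12
  rw [h2, h4] at h6
  have hQ6 : Q 6 = C (4/5) * X := by
    apply Polynomial.funext; intro x
    have hx := congrArg (eval x) h6
    simp only [eval_add, eval_sub, eval_mul, eval_pow, eval_C, eval_X, eval_zero,
      eval_one] at hx ⊢
    linear_combination hx / 10
  rw [hQ6, h4] at h8
  have hQ8 : Q 8 = C (32/35) * X^2 - C (1/7) := by
    apply Polynomial.funext; intro x
    have hx := congrArg (eval x) h8
    simp only [eval_add, eval_sub, eval_mul, eval_pow, eval_C, eval_X, eval_zero,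
      eval_one] at hx ⊢
    linear_combination hx / 14
  rw [hQ6, hQ8] at h10
  have hQ10 : Q 10 = C (128/105) * X^3 - C (48/105) * X := by
    apply Polynomial.funext; intro x
    have hx := congrArg (eval x) h10
    simp only [eval_add, eval_sub, eval_mul, eval_pow, eval_C, eval_X, eval_zero,
      eval_one] at hx ⊢
    linear_combination hx / 18
  rw [hQ8, hQ10] at h12
  have hQ12 : Q 12 = C (2048/1155) * X^4 - C (1248/1155) * X^2 + C (75/1155) := by
    apply Polynomial.funext; intro x
    have hx := congrArg (eval x) h12
    simp only [eval_add, eval_sub, eval_mul, eval_pow, eval_C, eval_X, eval_zero,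
      eval_one] at hx ⊢
    linear_combination hx / 22
  -- derivatives
  have d6 : derivative (Q 6) = C (4/5 : ℂ) := by rw [hQ6]; simp
  have dd6 : derivative (derivative (Q 6)) = 0 := by rw [d6]; simp
  have d8 : derivative (Q 8) = C (64/35 : ℂ) * X := by
    rw [hQ8]; simp; apply Polynomial.funext; intro x; simp only [eval_add, eval_sub, eval_mul, eval_pow, eval_C, eval_X, eval_one]; ring
  have dd8 : derivative (derivative (Q 8)) = C (64/35 : ℂ) := by rw [d8]; simp
  have d10 : derivative (Q 10) = C (384/105 : ℂ) * X^2 - C (48/105 : ℂ) := by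
    rw [hQ10]; simp; apply Polynomial.funext; intro x; simp only [eval_add, eval_sub, eval_mul, eval_pow, eval_C, eval_X, eval_one]; ring
  have dd10 : derivative (derivative (Q 10)) = C (768/105 : ℂ) * X := by
    rw [d10]; simp; apply Polynomial.funext; intro x; simp only [eval_add, eval_sub, eval_mul, eval_pow, eval_C, eval_X, eval_one]; ring
  have d12 : derivative (Q 12) = C (8192/1155 : ℂ) * X^3 - C (2496/1155 : ℂ) * X := by
    rw [hQ12]; simp; apply Polynomial.funext; intro x; simp only [eval_add, eval_sub, eval_mul, eval_pow, eval_C, eval_X, eval_one]; ring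
  have dd12 : derivative (derivative (Q 12)) = C (24576/1155 : ℂ) * X^2 - C (2496/1155 : ℂ) := by
    rw [d12]; simp; apply Polynomial.funext; intro x; simp only [eval_add, eval_sub, eval_mul, eval_pow, eval_C, eval_X, eval_one]; ring
  -- eigen equations
  obtain ⟨l1, E1⟩ := heig 1
  obtain ⟨l2, E2⟩ := heig 2
  obtain ⟨l3, E3⟩ := heig 3
  obtain ⟨l4, E4⟩ := heig 4
  rw [(by norm_num : 2*1+4 = 6), dd6, d6, hQ6] at E1
  rw [(by norm_num : 2*2+4 = 8), dd8, d8, hQ8] at E2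
  rw [(by norm_num : 2*3+4 = 10), dd10, d10, hQ10] at E3
  rw [(by norm_num : 2*4+4 = 12), dd12, d12, hQ12] at E4
  have Ef := congrArg (eval 0) E1
  have R1 := congrArg (eval 0) E2
  have R2 := congrArg (eval 1) E2
  have R3 := congrArg (eval (-1)) E2
  have S1 := congrArg (eval 1) E3
  have S3 := congrArg (eval 2) E3
  have T1 := congrArg (eval 0) E4
  have T2 := congrArg (eval 1) E4
  simp only [eval_add, eval_sub, eval_mul, eval_pow, eval_C, eval_X, eval_zero,
    eval_one] at Ef R1 R2 R3 S1 S3 T1 T2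
  have hf : f = 0 := by linear_combination (5/4 : ℂ) * Ef
  subst hf
  have hb : b = 0 := by linear_combination (35/128 : ℂ) * R2 - (35/128 : ℂ) * R3
  subst hb
  have hI : 5*a + 32*c₀ + 5*e = 0 := by
    linear_combination (945/64 : ℂ) * R1 + (175/128 : ℂ) * R2 + (175/128 : ℂ) * R3
  have hII : 3*a + 8*c₀ + e = 0 := by
    linear_combination (1015/768 : ℂ) * S1 - (175/1536 : ℂ) * S3
  have hIII : 345*a + 800*c₀ + 89*e = 0 := by
    linear_combination (-13475/64 : ℂ) * T1 + (1155/64 : ℂ) * T2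
  have ha : a = 0 := by
    linear_combination (-11/32 : ℂ) * hI + (9/2 : ℂ) * hII - (1/32 : ℂ) * hIII
  have hc : c₀ = 0 := by
    linear_combination (39/128 : ℂ) * hI - (5 : ℂ) * hII + (5/128 : ℂ) * hIII
  have he : e = 0 := by linear_combination hII - 3*ha - 8*hc
  exact ⟨ha, rfl, hc, he, rfl⟩
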